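/- arXiv:0711.3019 — 4 statements merged into one kernel-verified Lean document; each statement's English description precedes it below -/
import Mathlib

section
/- For the unambiguous discrimination measurement above, if the outcome is conclusive (third coordinate not observed, and measurement in the basis {(1,1,0)/√2, (1,−1,0)/√2, (0,0,1)}), the probability of a conclusive result on input u± is 2 sin² θ, and conditioned on a conclusive result the two states u₊ and u₋ are identified without error (the conclusive outcomes for u₊ and u₋ are orthogonal). -/
open scoped InnerProductSpace

noncomputable def uplus (θ : ℝ) : EuclideanSpace ℂ (Fin 3) :=
  WithLp.toLp 2 ![(Real.cos θ : ℂ), (Real.sin θ : ℂ), 0]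

noncomputable def uminus (θ : ℝ) : EuclideanSpace ℂ (Fin 3) :=
  WithLp.toLp 2 ![(Real.cos θ : ℂ), -(Real.sin θ : ℂ), 0]

noncomputable def vplus (θ : ℝ) : EuclideanSpace ℂ (Fin 3) :=
  WithLp.toLp 2 ![(Real.sin θ : ℂ), (Real.sin θ : ℂ), (Real.sqrt (Real.cos (2 * θ)) : ℂ)]

noncomputable def vminus (θ : ℝ) : EuclideanSpace ℂ (Fin 3) :=
  WithLp.toLp 2 ![(Real.sin θ : ℂ), -(Real.sin θ : ℂ), (Real.sqrt (Real.cos (2 * θ)) : ℂ)]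

/-- conclusive basis vectors e₁' = (1,1,0)/√2, e₂' = (1,−1,0)/√2 -/
noncomputable def econc1 : EuclideanSpace ℂ (Fin 3) :=
  WithLp.toLp 2 ((Real.sqrt 2 : ℂ)⁻¹ • ![(1 : ℂ), 1, 0])

noncomputable def econc2 : EuclideanSpace ℂ (Fin 3) :=
  WithLp.toLp 2 ((Real.sqrt 2 : ℂ)⁻¹ • ![(1 : ℂ), -1, 0])

/-- For the unambiguous-discrimination measurement, the probability of a conclusive
result on input u± is 2 sin² θ, and the conclusive outcomes for u₊ and u₋ are
disjoint (error-free discrimination). -/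
theorem stmt_2 (θ : ℝ) (hθ : θ ∈ Set.Icc 0 (Real.pi / 4))
    (U : EuclideanSpace ℂ (Fin 3) ≃ₗᵢ[ℂ] EuclideanSpace ℂ (Fin 3))
    (hUp : U (uplus θ) = vplus θ) (hUm : U (uminus θ) = vminus θ) :
    ‖⟪econc1, U (uplus θ)⟫_ℂ‖ ^ 2 + ‖⟪econc2, U (uplus θ)⟫_ℂ‖ ^ 2
        = 2 * Real.sin θ ^ 2 ∧
    ‖⟪econc1, U (uminus θ)⟫_ℂ‖ ^ 2 + ‖⟪econc2, U (uminus θ)⟫_ℂ‖ ^ 2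
        = 2 * Real.sin θ ^ 2 ∧
    ⟪econc2, U (uplus θ)⟫_ℂ = 0 ∧ ⟪econc1, U (uminus θ)⟫_ℂ = 0 := by
  rw [hUp, hUm]
  have h2 : (Real.sqrt 2 : ℝ) ≠ 0 := by positivity
  have key : ∀ a b : ℂ, ⟪econc1, (WithLp.toLp 2 ![a, b, (Real.sqrt (Real.cos (2*θ)) : ℂ)] : EuclideanSpace ℂ (Fin 3))⟫_ℂ = (Real.sqrt 2 : ℂ)⁻¹ * (a + b) := by
    intro a b
    simp [econc1, PiLp.inner_apply, Fin.sum_univ_three, PiLp.smul_apply,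
      Matrix.cons_val_zero, Matrix.cons_val_one, Matrix.head_cons, map_mul, map_inv₀]
    push_cast
    ring
  have key2 : ∀ a b : ℂ, ⟪econc2, (WithLp.toLp 2 ![a, b, (Real.sqrt (Real.cos (2*θ)) : ℂ)] : EuclideanSpace ℂ (Fin 3))⟫_ℂ = (Real.sqrt 2 : ℂ)⁻¹ * (a - b) := by
    intro a b
    simp [econc2, PiLp.inner_apply, Fin.sum_univ_three, PiLp.smul_apply,
      Matrix.cons_val_zero, Matrix.cons_val_one, Matrix.head_cons, map_mul, map_inv₀]
    push_cast
    ring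
  have e1p := key (Real.sin θ : ℂ) (Real.sin θ : ℂ)
  have e2p := key2 (Real.sin θ : ℂ) (Real.sin θ : ℂ)
  have e1m := key (Real.sin θ : ℂ) (-(Real.sin θ : ℂ))
  have e2m := key2 (Real.sin θ : ℂ) (-(Real.sin θ : ℂ))
  rw [show vplus θ = WithLp.toLp 2 ![(Real.sin θ : ℂ), (Real.sin θ : ℂ), (Real.sqrt (Real.cos (2*θ)) : ℂ)] from rfl,
    show vminus θ = WithLp.toLp 2 ![(Real.sin θ : ℂ), -(Real.sin θ : ℂ), (Real.sqrt (Real.cos (2*θ)) : ℂ)] from rfl]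
  rw [e1p, e2p, e1m, e2m]
  have habs : ∀ x : ℂ, ‖(Real.sqrt 2 : ℂ)⁻¹ * x‖ ^ 2 = (Real.sqrt 2)⁻¹ ^ 2 * ‖x‖ ^ 2 := by
    intro x
    rw [norm_mul, mul_pow]
    congr 1
    rw [norm_inv]
    norm_num [Complex.norm_real, abs_of_nonneg (Real.sqrt_nonneg 2)]
  have hsq : (Real.sqrt 2)⁻¹ ^ 2 = (2:ℝ)⁻¹ := by
    rw [inv_pow, Real.sq_sqrt (by norm_num : (2:ℝ) ≥ 0)]
  refine ⟨?_, ?_, ?_, ?_⟩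
  · rw [habs, habs, hsq,
      show ((Real.sin θ:ℂ) + Real.sin θ) = ((2*Real.sin θ:ℝ):ℂ) by push_cast; ring,
      show ((Real.sin θ:ℂ) - Real.sin θ) = ((0:ℝ):ℂ) by push_cast; ring]
    rw [Complex.norm_real, Complex.norm_real, Real.norm_eq_abs, Real.norm_eq_abs, sq_abs, sq_abs]
    ring
  · rw [habs, habs, hsq,
      show ((Real.sin θ:ℂ) + -Real.sin θ) = ((0:ℝ):ℂ) by push_cast; ring,
      show ((Real.sin θ:ℂ) - -Real.sin θ) = ((2*Real.sin θ:ℝ):ℂ) by push_cast; ring]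
    rw [Complex.norm_real, Complex.norm_real, Real.norm_eq_abs, Real.norm_eq_abs, sq_abs, sq_abs]
    ring
  · simp
  · simp
end

section
/- For the φ = 0 interferometer measuring only time-bin t₁ (projections onto |s₁⟩ and |d₁⟩), the state |0_x⟩ gives outcome |d₁⟩ with probability 1/2 and outcome |s₁⟩ with probability 0, while |1_x⟩ gives outcome |s₁⟩ with probability 1/2 and outcome |d₁⟩ with probability 0; hence conditioned on a conclusive click the bit is identified without error. -/
open scoped InnerProductSpace

/-- For the φ = 0 interferometer measuring only time-bin t₁ (projections onto s₁ = f 1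
and d₁ = f 4): |0_x⟩ gives outcome d₁ with probability 1/2 and outcome s₁ with
probability 0, while |1_x⟩ gives outcome s₁ with probability 1/2 and outcome d₁ with
probability 0; hence a conclusive click identifies the bit without error. -/
theorem stmt_9 {H : Type*} [NormedAddCommGroup H] [InnerProductSpace ℂ H]
    (f : Fin 6 → H) (hf : Orthonormal ℂ f)
    (T : EuclideanSpace ℂ (Fin 2) →ₗ[ℂ] H)
    (h10 : T (EuclideanSpace.single 0 1) =
      (2 : ℂ)⁻¹ • (f 0 - f 1 + Complex.I • f 3 + Complex.I • f 4))
    (h01 : T (EuclideanSpace.single 1 1) =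
      (2 : ℂ)⁻¹ • (f 1 - f 2 + Complex.I • f 4 + Complex.I • f 5)) :
    ‖⟪f 4, T ((Real.sqrt 2 : ℂ)⁻¹ •
        (EuclideanSpace.single 0 1 + EuclideanSpace.single 1 1))⟫_ℂ‖ ^ 2 = 1 / 2 ∧
    ⟪f 1, T ((Real.sqrt 2 : ℂ)⁻¹ •
        (EuclideanSpace.single 0 1 + EuclideanSpace.single 1 1))⟫_ℂ = 0 ∧
    ‖⟪f 1, T ((Real.sqrt 2 : ℂ)⁻¹ •
        (EuclideanSpace.single 0 1 - EuclideanSpace.single 1 1))⟫_ℂ‖ ^ 2 = 1 / 2 ∧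
    ⟪f 4, T ((Real.sqrt 2 : ℂ)⁻¹ •
        (EuclideanSpace.single 0 1 - EuclideanSpace.single 1 1))⟫_ℂ = 0 := by
  have horth := orthonormal_iff_ite.mp hf
  have h2 : ((Real.sqrt 2 : ℂ))⁻¹ ≠ 0 := by
    simp [Complex.ofReal_ne_zero, Real.sqrt_eq_zero']
  simp only [map_smul, map_add, map_sub, h10, h01, inner_smul_right, inner_add_right,
    inner_sub_right, horth, Fin.reduceEq, if_true, if_false]
  norm_num
  rw [show (1/2*Complex.I + 1/2*Complex.I) = Complex.I by ring]
  simp [Complex.norm_I, abs_of_nonneg (Real.sqrt_nonneg 2), inv_pow]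
end

section
/- Under the Reversed-Space attack, the image of |0⟩_E ⊗ |1_x⟩, where |1_x⟩ = (|0100⟩−|0010⟩)/√2, equals (1/√8)(|E₀⟩−|E₁⟩)(|0100⟩−|0010⟩) + (1/√8)(|E₀⟩+|E₁⟩)(|1000⟩+|0001⟩); consequently, projecting the attacked |0_x⟩ and |1_x⟩ states onto the subspace span{|0100⟩,|0010⟩} of H^P yields Eve-states (|E₀⟩±|E₁⟩)/√2 that are orthogonal. -/
open scoped InnerProductSpace

/-- Under the Reversed-Space attack, the image of |0⟩_E ⊗ |1_x⟩, where
|1_x⟩ = (|0100⟩−|0010⟩)/√2, equals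
(1/√8)(|E₀⟩−|E₁⟩)(|0100⟩−|0010⟩) + (1/√8)(|E₀⟩+|E₁⟩)(|1000⟩+|0001⟩);
consequently the components of the attacked |0_x⟩ and |1_x⟩ states in
H^E ⊗ span{|0100⟩,|0010⟩} (carrying Eve states (|E₀⟩±|E₁⟩)/√2) are orthogonal.
Here g (i, j) = |E_i⟩ ⊗ |channel_j⟩ with channel basis
(|1000⟩, |0100⟩, |0010⟩, |0001⟩). -/
theorem stmt_12 {H : Type*} [NormedAddCommGroup H] [InnerProductSpace ℂ H]
    (g : Fin 2 × Fin 4 → H) (hg : Orthonormal ℂ g)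
    (T : EuclideanSpace ℂ (Fin 2) →ₗ[ℂ] H)
    (h0 : T (EuclideanSpace.single 0 1) =
      (2 : ℂ)⁻¹ • (g (0, 0) + g (0, 1)) + (2 : ℂ)⁻¹ • (g (1, 2) + g (1, 3)))
    (h1 : T (EuclideanSpace.single 1 1) =
      (2 : ℂ)⁻¹ • (-g (1, 0) + g (1, 1)) + (2 : ℂ)⁻¹ • (g (0, 2) - g (0, 3))) :
    T ((Real.sqrt 2 : ℂ)⁻¹ • (EuclideanSpace.single 0 1 - EuclideanSpace.single 1 1)) =
      (Real.sqrt 8 : ℂ)⁻¹ • ((g (0, 1) - g (0, 2) - (g (1, 1) - g (1, 2)))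
        + (g (0, 0) + g (0, 3) + (g (1, 0) + g (1, 3)))) ∧
    ⟪(Real.sqrt 8 : ℂ)⁻¹ • (g (0, 1) + g (0, 2) + (g (1, 1) + g (1, 2))),
      (Real.sqrt 8 : ℂ)⁻¹ • (g (0, 1) - g (0, 2) - (g (1, 1) - g (1, 2)))⟫_ℂ = 0 := by
  have hsqrt : (Real.sqrt 8 : ℂ)⁻¹ = (Real.sqrt 2 : ℂ)⁻¹ * (2 : ℂ)⁻¹ := by
    rw [← mul_inv]
    congr 1
    have : Real.sqrt 8 = Real.sqrt 2 * 2 := by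
      rw [show (8 : ℝ) = 2 * 2 ^ 2 by norm_num, Real.sqrt_mul (by norm_num),
        Real.sqrt_sq (by norm_num)]
    rw [this]
    push_cast
    ring
  constructor
  · rw [map_smul, map_sub, h0, h1, hsqrt]
    module
  · have hinner : ∀ i j : Fin 2 × Fin 4, ⟪g i, g j⟫_ℂ = if i = j then 1 else 0 :=
      orthonormal_iff_ite.mp hg
    simp only [inner_smul_left, inner_smul_right, inner_add_left, inner_add_right,
      inner_sub_left, inner_sub_right, hinner]
    norm_num [Prod.ext_iff]
end

section
/- In the Reversed-Space attack, the probability that Bob obtains a conclusive x-basis result on the attacked |0_x⟩ or |1_x⟩ state is 1/2 times the norm squared of the first term, i.e. the total squared amplitude of the component in H^E ⊗ span{|0100⟩,|0010⟩} equals 1/2; the remaining weight 1/2 lies in H^E ⊗ span{|1000⟩,|0001⟩}. -/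
open scoped InnerProductSpace

/-- In the Reversed-Space attack, for ψ the attacked |0_x⟩ or |1_x⟩ state, the total
squared amplitude of the component in H^E ⊗ span{|0100⟩,|0010⟩} equals 1/2, and the
remaining weight 1/2 lies in H^E ⊗ span{|1000⟩,|0001⟩}.
Here g (i, j) = |E_i⟩ ⊗ |channel_j⟩ with channel basis
(|1000⟩, |0100⟩, |0010⟩, |0001⟩). -/
theorem stmt_14 {H : Type*} [NormedAddCommGroup H] [InnerProductSpace ℂ H]
    (g : Fin 2 × Fin 4 → H) (hg : Orthonormal ℂ g)
    (T : EuclideanSpace ℂ (Fin 2) →ₗ[ℂ] H)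
    (h0 : T (EuclideanSpace.single 0 1) =
      (2 : ℂ)⁻¹ • (g (0, 0) + g (0, 1)) + (2 : ℂ)⁻¹ • (g (1, 2) + g (1, 3)))
    (h1 : T (EuclideanSpace.single 1 1) =
      (2 : ℂ)⁻¹ • (-g (1, 0) + g (1, 1)) + (2 : ℂ)⁻¹ • (g (0, 2) - g (0, 3))) :
    ∀ ψ : H,
      (ψ = T ((Real.sqrt 2 : ℂ)⁻¹ •
          (EuclideanSpace.single 0 1 + EuclideanSpace.single 1 1)) ∨
       ψ = T ((Real.sqrt 2 : ℂ)⁻¹ •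
          (EuclideanSpace.single 0 1 - EuclideanSpace.single 1 1))) →
      (∑ i : Fin 2, (‖⟪g (i, 1), ψ⟫_ℂ‖ ^ 2
          + ‖⟪g (i, 2), ψ⟫_ℂ‖ ^ 2)) = 1 / 2 ∧
      (∑ i : Fin 2, (‖⟪g (i, 0), ψ⟫_ℂ‖ ^ 2
          + ‖⟪g (i, 3), ψ⟫_ℂ‖ ^ 2)) = 1 / 2 := by
  have hij : ∀ i j, ⟪g i, g j⟫_ℂ = if i = j then 1 else 0 := orthonormal_iff_ite.mp hg
  have hsq : (Real.sqrt 2) ^ 2 = 2 := Real.sq_sqrt (by norm_num)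
  intro ψ hψ
  rcases hψ with h | h <;> subst h <;> constructor <;>
  · simp only [map_smul, map_add, map_sub, h0, h1, Fin.sum_univ_two,
      inner_smul_right, inner_add_right, inner_sub_right, inner_neg_right, hij,
      Prod.mk.injEq, Fin.isValue]
    simp only [Fin.reduceEq, if_true, if_false, reduceIte]
    norm_num [ norm_mul, norm_inv, Complex.norm_real, Complex.norm_two,
      abs_of_nonneg (Real.sqrt_nonneg 2)]
    have h2 : ((Real.sqrt 2 : ℝ)⁻¹ * (1 / 2)) ^ 2 = 1 / 8 := by
      rw [mul_pow, inv_pow, hsq]; norm_num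
    linarith [h2]
end
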